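/- (Theorem 1, time-domain generating matrix.) Let M ≥ 2, K ≥ 1, let π be a permutation of {0,…,K−1}, and let U⁽⁰⁾, …, U⁽ᴷ⁾ be arbitrary M×M complex matrices. Over the polynomial ring ℂ[X], define the M×M matrix polynomial P(X) = U⁽⁰⁾ · ∏_{k=0}^{K−1} ( D⁽ᵏ⁾(X) · U⁽ᵏ⁺¹⁾ ), where D⁽ᵏ⁾(X) is the diagonal matrix with diagonal entries X^{m·M^{π(k)}} for m = 0,…,M−1, and the product is taken in order of increasing k. Then P(X) = ∑_{n=0}^{M^K−1} 𝓜(n)·X^n, where 𝓜(n) = U⁽⁰⁾ · ∏_{k=0}^{K−1} ( diag(e_{d_{π(k)}(n)}) · U⁽ᵏ⁺¹⁾ ), e_j denotes the j-th standard basis column vector of ℂ^M, diag(e_j) is the diagonal matrix whose only nonzero diagonal entry is a 1 in position j, and d_k(n) denotes the k-th digit of the radix-M expansion of n. -/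

import Mathlib

open Matrix Polynomial

/-- The `k`-th digit of the radix-`M` expansion of `n`, as an element of `Fin M`. -/
def fdig (M : ℕ) (hM : 0 < M) (k n : ℕ) : Fin M :=
  ⟨n / M ^ k % M, Nat.mod_lt _ hM⟩

section helpers
variable {M : ℕ}

lemma digit_sum_lt (hM : 0 < M) (K : ℕ) (c : ℕ → ℕ) (hc : ∀ j < K, c j < M) :
    ∑ j ∈ Finset.range K, c j * M ^ j < M ^ K := by
  induction K with
  | zero => simpa using hM
  | succ K ih =>
    rw [Finset.sum_range_succ]
    have h1 : ∑ j ∈ Finset.range K, c j * M ^ j < M ^ K :=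
      ih (fun j hj => hc j (by omega))
    have h2 : c K ≤ M - 1 := by have := hc K (by omega); omega
    have h3 : c K * M ^ K ≤ (M - 1) * M ^ K := Nat.mul_le_mul_right _ h2
    have key : M ^ K + (M - 1) * M ^ K = M ^ (K + 1) := by
      have : M - 1 + 1 = M := by omega
      calc M ^ K + (M - 1) * M ^ K = ((M - 1) + 1) * M ^ K := by rw [Nat.succ_mul]; ring
        _ = M ^ (K + 1) := by rw [this, pow_succ]; ring
    omega

lemma digit_sum_eq (hM : 0 < M) (K : ℕ) (c : ℕ → ℕ) (hc : ∀ j < K, c j < M)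
    (i : ℕ) (hi : i < K) :
    (∑ j ∈ Finset.range K, c j * M ^ j) / M ^ i % M = c i := by
  have hMi : 0 < M ^ i := Nat.pow_pos hM
  have hsplit : ∑ j ∈ Finset.range K, c j * M ^ j
      = (∑ j ∈ Finset.range i, c j * M ^ j) + c i * M ^ i
        + ∑ j ∈ Finset.Ico (i + 1) K, c j * M ^ j := by
    rw [Finset.range_eq_Ico, ← Finset.sum_Ico_consecutive _ (Nat.zero_le (i+1)) hi,
      ← Finset.range_eq_Ico, Finset.sum_range_succ]
  have hA : ∑ j ∈ Finset.range i, c j * M ^ j < M ^ i :=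
    digit_sum_lt hM i c (fun j hj => hc j (by omega))
  have hdvd : (M * M ^ i) ∣ ∑ j ∈ Finset.Ico (i + 1) K, c j * M ^ j := by
    apply Finset.dvd_sum
    intro j hj
    have hj1 : i + 1 ≤ j := (Finset.mem_Ico.mp hj).1
    have : M * M ^ i ∣ M ^ j := by
      rw [← pow_succ']
      exact pow_dvd_pow M hj1
    exact Dvd.dvd.mul_left this _
  obtain ⟨B, hB⟩ := hdvd
  rw [hsplit, hB]
  have : (∑ j ∈ Finset.range i, c j * M ^ j) + c i * M ^ i + M * M ^ i * B
      = (∑ j ∈ Finset.range i, c j * M ^ j) + (c i + M * B) * M ^ i := by ring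
  rw [this, Nat.add_mul_div_right _ _ hMi, Nat.div_eq_of_lt hA, zero_add,
    Nat.add_mul_mod_self_left, Nat.mod_eq_of_lt (hc i hi)]

lemma digit_reconstruct (hM : 0 < M) (K : ℕ) :
    ∀ n, ∑ k ∈ Finset.range K, n / M ^ k % M * M ^ k = n % M ^ K := by
  induction K with
  | zero => intro n; simp [Nat.mod_one]
  | succ K ih =>
    intro n
    rw [Finset.sum_range_succ, ih, pow_succ, Nat.mod_mul]
    ring

lemma sum_perm {β : Type*} [AddCommMonoid β] {K : ℕ} {σ : ℕ → ℕ}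
    (hσ : Set.BijOn σ (Set.Iio K) (Set.Iio K)) (g : ℕ → β) :
    ∑ j ∈ Finset.range K, g (σ j) = ∑ i ∈ Finset.range K, g i := by
  have himg : (Finset.range K).image σ = Finset.range K := by
    ext i
    simp only [Finset.mem_image, Finset.mem_range]
    constructor
    · rintro ⟨j, hj, rfl⟩
      exact hσ.mapsTo (by simpa using hj)
    · intro hi
      obtain ⟨j, hj, hji⟩ := hσ.surjOn (by simpa using hi)
      exact ⟨j, by simpa using hj, hji⟩
  have hinj : ∀ x ∈ Finset.range K, ∀ y ∈ Finset.range K, σ x = σ y → x = y := by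
    intro x hx y hy h
    exact hσ.injOn (by simpa using hx) (by simpa using hy) h
  calc ∑ j ∈ Finset.range K, g (σ j)
      = ∑ i ∈ (Finset.range K).image σ, g i := (Finset.sum_image hinj).symm
    _ = ∑ i ∈ Finset.range K, g i := by rw [himg]

lemma list_prod_smul {ι R S : Type*} [CommMonoid R] [Monoid S] [MulAction R S]
    [SMulCommClass R S S] [IsScalarTower R S S]
    (l : List ι) (c : ι → R) (B : ι → S) :
    (l.map (fun k => c k • B k)).prod = (l.map c).prod • (l.map B).prod := by
  induction l with
  | nil => simp
  | cons a l ih =>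
    simp only [List.map_cons, List.prod_cons, ih, smul_mul_assoc, mul_smul_comm, smul_smul]
    rw [mul_comm]

lemma pow_list_range {S : Type*} [Monoid S] (x : S) (K : ℕ) (e : ℕ → ℕ) :
    ((List.range K).map (fun k => x ^ e k)).prod = x ^ ∑ k ∈ Finset.range K, e k := by
  induction K with
  | zero => simp
  | succ K ih => rw [List.range_succ, Finset.sum_range_succ, List.map_append, List.prod_append,
      pow_add, ih]; simp

lemma sum_range_mul {β : Type*} [AddCommMonoid β] (a b : ℕ) (F : ℕ → β) :
    ∑ n ∈ Finset.range (a * b), F n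
      = ∑ j ∈ Finset.range b, ∑ i ∈ Finset.range a, F (i + j * a) := by
  rw [← Finset.sum_product']
  apply Finset.sum_nbij' (i := fun n => ((n / a : ℕ), (n % a : ℕ)))
    (j := fun p => p.2 + p.1 * a)
  · intro n hn
    have hn' := Finset.mem_range.mp hn
    have ha : 0 < a := by
      rcases Nat.eq_zero_or_pos a with h | h
      · subst h; simp at hn'
      · exact h
    simp only [Finset.mem_product, Finset.mem_range]
    exact ⟨Nat.div_lt_iff_lt_mul ha |>.mpr (by rwa [mul_comm] at hn'), Nat.mod_lt _ ha⟩
  · rintro ⟨j, i⟩ hp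
    simp only [Finset.mem_product, Finset.mem_range] at hp
    apply Finset.mem_range.mpr
    calc i + j * a < a + j * a := Nat.add_lt_add_right hp.2 _
      _ ≤ a + (b - 1) * a := by
          have : j ≤ b - 1 := by omega
          exact Nat.add_le_add_left (Nat.mul_le_mul_right _ this) _
      _ = a * b := by
          have hb : 0 < b := by omega
          have : b - 1 + 1 = b := by omega
          calc a + (b - 1) * a = ((b - 1) + 1) * a := by rw [Nat.succ_mul]; ring
            _ = a * b := by rw [this]; ring
  · intro n hn
    simp [Nat.mod_add_div']
  · rintro ⟨j, i⟩ hp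
    simp only [Finset.mem_product, Finset.mem_range] at hp
    have ha : 0 < a := by omega
    simp [Nat.add_mul_div_right _ _ ha, Nat.div_eq_of_lt hp.2, Nat.add_mul_mod_self_right,
      Nat.mod_eq_of_lt hp.2]
  · intro n hn; simp [Nat.mod_add_div']

lemma fdig_add_high_lt (hM : 0 < M) {K n d : ℕ} (hn : n < M ^ K) (hd : d < M)
    {k : ℕ} (hk : k < K) : fdig M hM k (n + d * M ^ K) = fdig M hM k n := by
  apply Fin.ext
  show (n + d * M ^ K) / M ^ k % M = n / M ^ k % M
  have h1 : d * M ^ K = d * M ^ (K - k) * M ^ k := by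
    rw [mul_assoc, ← pow_add]
    congr 2
    omega
  have h2 : d * M ^ (K - k) = d * M ^ (K - k - 1) * M := by
    rw [mul_assoc, ← pow_succ]
    congr 2
    omega
  rw [h1, Nat.add_mul_div_right _ _ (Nat.pow_pos hM), h2,
    Nat.add_mul_mod_self_right]

lemma fdig_add_high_top (hM : 0 < M) {K n d : ℕ} (hn : n < M ^ K) (hd : d < M) :
    fdig M hM K (n + d * M ^ K) = ⟨d, hd⟩ := by
  apply Fin.ext
  show (n + d * M ^ K) / M ^ K % M = d
  rw [Nat.add_mul_div_right _ _ (Nat.pow_pos hM), Nat.div_eq_of_lt hn, zero_add,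
    Nat.mod_eq_of_lt hd]

lemma prod_sum_expand {S : Type*} [Semiring S] (hM : 0 < M) (K : ℕ) (A : ℕ → Fin M → S) :
    ((List.range K).map (fun k => ∑ d : Fin M, A k d)).prod
      = ∑ n ∈ Finset.range (M ^ K),
          ((List.range K).map (fun k => A k (fdig M hM k n))).prod := by
  induction K with
  | zero => simp
  | succ K ih =>
    have hstep : ((List.range (K + 1)).map (fun k => ∑ d : Fin M, A k d)).prod
        = ∑ n ∈ Finset.range (M ^ K), ∑ d : Fin M,
            ((List.range K).map (fun k => A k (fdig M hM k n))).prod * A K d := by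
      rw [List.range_succ, List.map_append, List.prod_append, ih]
      simp only [List.map_cons, List.map_nil, List.prod_cons, List.prod_nil, mul_one]
      rw [Finset.sum_mul_sum]
    rw [hstep, pow_succ, sum_range_mul]
    rw [← Fin.sum_univ_eq_sum_range (fun j => ∑ i ∈ Finset.range (M ^ K),
      ((List.range (K + 1)).map (fun k => A k (fdig M hM k (i + j * M ^ K)))).prod) M]
    rw [Finset.sum_comm]
    apply Finset.sum_congr rfl
    intro d _
    apply Finset.sum_congr rfl
    intro n hn
    have hn' := Finset.mem_range.mp hn
    rw [List.range_succ, List.map_append, List.prod_append]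
    simp only [List.map_cons, List.map_nil, List.prod_cons, List.prod_nil, mul_one]
    rw [fdig_add_high_top hM hn' d.isLt]
    congr 1
    congr 1
    apply List.map_congr_left
    intro k hk
    rw [fdig_add_high_lt hM hn' d.isLt (List.mem_range.mp hk)]

lemma diag_expand (M : ℕ) (e : ℕ) :
    Matrix.diagonal (fun m : Fin M => (X : Polynomial ℂ) ^ ((m : ℕ) * e))
      = ∑ d : Fin M, (X : Polynomial ℂ) ^ ((d : ℕ) * e) •
          Matrix.diagonal (Pi.single d (1 : Polynomial ℂ)) := by
  ext i j
  by_cases h : i = j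
  · subst h
    simp [Matrix.sum_apply, Matrix.diagonal_apply, Pi.single_apply, mul_ite, eq_comm]
  · simp [Matrix.sum_apply, Matrix.diagonal_apply_ne _ h, Matrix.diagonal_apply, h]

end helpers

set_option maxHeartbeats 1000000 in
/-- **Theorem 1.** The standard-delay paraunitary generating
matrix `P(X) = U⁽⁰⁾ ∏_k (D⁽ᵏ⁾(X) U⁽ᵏ⁺¹⁾)` with delays `m·M^{σ(k)}` equals
`∑_{n < M^K} 𝓜(n) Xⁿ`, where
`𝓜(n) = U⁽⁰⁾ ∏_k (diag(e_{d_{σ(k)}(n)}) U⁽ᵏ⁺¹⁾)`. -/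
theorem time_domain_generating_matrix
    (M K : ℕ) (hM : 2 ≤ M) (hK : 1 ≤ K)
    (σ : ℕ → ℕ) (hσ : Set.BijOn σ (Set.Iio K) (Set.Iio K))
    (U : ℕ → Matrix (Fin M) (Fin M) ℂ)
    (P : Matrix (Fin M) (Fin M) (Polynomial ℂ))
    (hP : P = (U 0).map Polynomial.C *
      ((List.range K).map (fun k =>
        Matrix.diagonal (fun m : Fin M => (Polynomial.X : Polynomial ℂ) ^ ((m : ℕ) * M ^ σ k)) *
          (U (k + 1)).map Polynomial.C)).prod)
    (𝓜 : ℕ → Matrix (Fin M) (Fin M) ℂ)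
    (h𝓜 : ∀ n, 𝓜 n = U 0 *
      ((List.range K).map (fun k =>
        Matrix.diagonal (Pi.single (fdig M (by omega) (σ k) n) (1 : ℂ)) *
          U (k + 1))).prod) :
    P = ∑ n ∈ Finset.range (M ^ K),
          (Polynomial.X : Polynomial ℂ) ^ n • (𝓜 n).map Polynomial.C := by
  have hM0 : 0 < M := by omega
  subst hP
  -- expand each diagonal delay factor as a sum over digits
  have hfac : ∀ k : ℕ,
      Matrix.diagonal (fun m : Fin M => (Polynomial.X : Polynomial ℂ) ^ ((m : ℕ) * M ^ σ k)) *
        (U (k + 1)).map Polynomial.C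
      = ∑ d : Fin M, ((Polynomial.X : Polynomial ℂ) ^ ((d : ℕ) * M ^ σ k) •
          (Matrix.diagonal (Pi.single d (1 : Polynomial ℂ)) * (U (k + 1)).map Polynomial.C)) := by
    intro k
    rw [diag_expand, Finset.sum_mul]
    exact Finset.sum_congr rfl fun d _ => smul_mul_assoc _ _ _
  simp only [hfac]
  rw [prod_sum_expand hM0 K (fun k d => (Polynomial.X : Polynomial ℂ) ^ ((d : ℕ) * M ^ σ k) •
        (Matrix.diagonal (Pi.single d (1 : Polynomial ℂ)) * (U (k + 1)).map Polynomial.C))]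
  rw [Finset.mul_sum]
  -- pull scalars out of the list products
  have hpull : ∀ n,
      ((List.range K).map (fun k => (Polynomial.X : Polynomial ℂ) ^
          ((fdig M hM0 k n : ℕ) * M ^ σ k) •
        (Matrix.diagonal (Pi.single (fdig M hM0 k n) (1 : Polynomial ℂ)) *
          (U (k + 1)).map Polynomial.C))).prod
      = (Polynomial.X : Polynomial ℂ) ^ (∑ k ∈ Finset.range K, (fdig M hM0 k n : ℕ) * M ^ σ k) •
        ((List.range K).map (fun k =>
          Matrix.diagonal (Pi.single (fdig M hM0 k n) (1 : Polynomial ℂ)) *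
            (U (k + 1)).map Polynomial.C)).prod := by
    intro n
    rw [list_prod_smul (List.range K)
      (fun k => (Polynomial.X : Polynomial ℂ) ^ ((fdig M hM0 k n : ℕ) * M ^ σ k))
      (fun k => Matrix.diagonal (Pi.single (fdig M hM0 k n) (1 : Polynomial ℂ)) *
        (U (k + 1)).map Polynomial.C),
      pow_list_range]
  simp only [hpull, mul_smul_comm]
  -- the mapped 𝓜
  have hmap : ∀ n, (𝓜 n).map Polynomial.C
      = (U 0).map Polynomial.C * ((List.range K).map (fun k =>
          Matrix.diagonal (Pi.single (fdig M hM0 (σ k) n) (1 : Polynomial ℂ)) *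
            (U (k + 1)).map Polynomial.C)).prod := by
    intro n
    rw [h𝓜 n, ← RingHom.mapMatrix_apply (Polynomial.C : ℂ →+* Polynomial ℂ), _root_.map_mul,
      map_list_prod, RingHom.mapMatrix_apply]
    congr 1
    rw [List.map_map]
    congr 1
    apply List.map_congr_left
    intro k _
    simp only [Function.comp, RingHom.mapMatrix_apply]
    rw [Matrix.map_mul]
    congr 1
    rw [Matrix.diagonal_map (by simp)]
    have hfun : (fun m : Fin M => Polynomial.C ((Pi.single (fdig M hM0 (σ k) n) (1 : ℂ) : Fin M → ℂ) m))
        = (Pi.single (fdig M hM0 (σ k) n) (1 : Polynomial ℂ) : Fin M → Polynomial ℂ) := by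
      funext i
      rcases eq_or_ne i (fdig M hM0 (σ k) n) with h | h
      · subst h; simp
      · simp [Pi.single_eq_of_ne h]
    rw [hfun]
  simp only [hmap]
  -- set up the reindexing bijection
  set Φ : ℕ → ℕ := fun n => ∑ k ∈ Finset.range K, (fdig M hM0 k n : ℕ) * M ^ σ k with hΦ
  set τ : ℕ → ℕ := Function.invFunOn σ (Set.Iio K) with hτ
  have hτσ : ∀ j, j < K → τ (σ j) = j := fun j hj =>
    hσ.injOn.leftInvOn_invFunOn (show j ∈ Set.Iio K from hj)
  have hστ : ∀ i, i < K → σ (τ i) = i := by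
    intro i hi
    obtain ⟨j, hj, hji⟩ := hσ.surjOn (show i ∈ Set.Iio K from hi)
    exact Function.invFunOn_eq ⟨j, hj, hji⟩
  have hτmem : ∀ i, i < K → τ i < K := by
    intro i hi
    obtain ⟨j, hj, hji⟩ := hσ.surjOn (show i ∈ Set.Iio K from hi)
    exact Function.invFunOn_mem ⟨j, hj, hji⟩
  have hΦeq : ∀ n, Φ n = ∑ i ∈ Finset.range K, (fdig M hM0 (τ i) n : ℕ) * M ^ i := by
    intro n
    rw [← sum_perm hσ (fun i => (fdig M hM0 (τ i) n : ℕ) * M ^ i)]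
    apply Finset.sum_congr rfl
    intro j hj
    rw [hτσ j (Finset.mem_range.mp hj)]
  have hΦlt : ∀ n, Φ n < M ^ K := by
    intro n
    rw [hΦeq]
    exact digit_sum_lt hM0 K _ (fun j _ => (fdig M hM0 (τ j) n).isLt)
  have hdigΦ : ∀ n k, k < K → fdig M hM0 (σ k) (Φ n) = fdig M hM0 k n := by
    intro n k hk
    apply Fin.ext
    show Φ n / M ^ (σ k) % M = n / M ^ k % M
    rw [hΦeq, digit_sum_eq hM0 K _ (fun j _ => (fdig M hM0 (τ j) n).isLt) (σ k) (hσ.mapsTo hk)]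
    show (fdig M hM0 (τ (σ k)) n : ℕ) = n / M ^ k % M
    rw [hτσ k hk]
    rfl
  apply Finset.sum_bij (fun n _ => Φ n)
  · intro n _
    exact Finset.mem_range.mpr (hΦlt n)
  · intro n₁ h₁ n₂ h₂ h
    have h₁' := Finset.mem_range.mp h₁
    have h₂' := Finset.mem_range.mp h₂
    have hd : ∀ k, k < K → n₁ / M ^ k % M = n₂ / M ^ k % M := by
      intro k hk
      have e1 := hdigΦ n₁ k hk
      have e2 := hdigΦ n₂ k hk
      rw [h] at e1
      exact congrArg Fin.val (e1.symm.trans e2)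
    have : n₁ % M ^ K = n₂ % M ^ K := by
      rw [← digit_reconstruct hM0 K n₁, ← digit_reconstruct hM0 K n₂]
      exact Finset.sum_congr rfl fun k hk => by
        rw [hd k (Finset.mem_range.mp hk)]
    rwa [Nat.mod_eq_of_lt h₁', Nat.mod_eq_of_lt h₂'] at this
  · intro m hm
    have hm' := Finset.mem_range.mp hm
    refine ⟨∑ k ∈ Finset.range K, (fdig M hM0 (σ k) m : ℕ) * M ^ k, ?_, ?_⟩
    · exact Finset.mem_range.mpr
        (digit_sum_lt hM0 K _ (fun j _ => (fdig M hM0 (σ j) m).isLt))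
    · have hdig : ∀ k, k < K →
          fdig M hM0 k (∑ j ∈ Finset.range K, (fdig M hM0 (σ j) m : ℕ) * M ^ j)
            = fdig M hM0 (σ k) m := by
        intro k hk
        apply Fin.ext
        exact digit_sum_eq hM0 K _ (fun j _ => (fdig M hM0 (σ j) m).isLt) k hk
      show Φ _ = m
      rw [hΦ]
      calc ∑ k ∈ Finset.range K,
            (fdig M hM0 k (∑ j ∈ Finset.range K, (fdig M hM0 (σ j) m : ℕ) * M ^ j) : ℕ) * M ^ σ k
          = ∑ k ∈ Finset.range K, (fdig M hM0 (σ k) m : ℕ) * M ^ σ k := by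
            exact Finset.sum_congr rfl fun k hk => by
              rw [hdig k (Finset.mem_range.mp hk)]
        _ = ∑ i ∈ Finset.range K, (fdig M hM0 i m : ℕ) * M ^ i :=
            sum_perm hσ (fun i => (fdig M hM0 i m : ℕ) * M ^ i)
        _ = m % M ^ K := digit_reconstruct hM0 K m
        _ = m := Nat.mod_eq_of_lt hm'
  · intro n _
    refine congrArg (fun L : List (Matrix (Fin M) (Fin M) (Polynomial ℂ)) =>
      (Polynomial.X : Polynomial ℂ) ^ Φ n • ((U 0).map Polynomial.C * L.prod)) ?_
    apply List.map_congr_left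
    intro k hk
    rw [hdigΦ n k (List.mem_range.mp hk)]
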